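/- Let (K, δ*) be an iterative q-difference field with constants C. If x₁, …, x_r ∈ K are linearly independent over C, then there exist natural numbers d₁, …, d_r such that the Wronskian-type determinant det((δ^{(d_i)}(x_j))_{i,j=1}^r) is nonzero. -/

import Mathlib

/-- The Gaussian (q-)binomial coefficient, defined by the q-Pascal recursion. -/
def qbinom {R : Type*} [CommRing R] (q : R) : ℕ → ℕ → R
  | _, 0 => 1
  | 0, _ + 1 => 0
  | n + 1, k + 1 => qbinom q n k + q ^ (k + 1) * qbinom q n (k + 1)

/-- An iterative `q`-difference ring structure on a commutative ring `R`,
relative to distinguished elements `q` and `t` of `R` (the images of the root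
of unity `q ∈ C` and of the variable `t ∈ C(t)`).  It consists of a ring
automorphism `σ` (extending `f(t) ↦ f(qt)`) and a family of additive maps
`δ^{(k)}` satisfying `δ^{(0)} = id`, `δ^{(1)} = (σ − id)/((q−1)t)`, the twisted
Leibniz rule, and the iteration rule
`δ^{(i)} ∘ δ^{(j)} = [i+j, i]_q δ^{(i+j)}`. -/
structure IDqRing (R : Type*) [CommRing R] (q t : R) where
  σ : R ≃+* R
  δ : ℕ → R →+ R
  δ_zero : ∀ a : R, δ 0 a = a
  δ_one : ∀ a : R, (q - 1) * t * δ 1 a = σ a - a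
  σ_q : σ q = q
  σ_t : σ t = q * t
  δ_q : ∀ k, 0 < k → δ k q = 0
  δ_t : ∀ k, 1 < k → δ k t = 0
  leibniz : ∀ (k : ℕ) (a b : R),
    δ k (a * b) = ∑ ij ∈ Finset.HasAntidiagonal.antidiagonal k, (⇑σ)^[ij.1] (δ ij.2 a) * δ ij.1 b
  iter : ∀ (i j : ℕ) (a : R), δ i (δ j a) = qbinom q (i + j) i * δ (i + j) a

lemma qbinom_zero_right {R : Type*} [CommRing R] (q : R) (n : ℕ) : qbinom q n 0 = 1 := by
  cases n <;> rfl

lemma qbinom_zero_succ {R : Type*} [CommRing R] (q : R) (k : ℕ) : qbinom q 0 (k+1) = 0 := rfl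

lemma qbinom_succ_one {R : Type*} [CommRing R] (q : R) (n : ℕ) :
    qbinom q (n+1) 1 = 1 + q * qbinom q n 1 := by
  show qbinom q n 0 + q ^ (0+1) * qbinom q n (0+1) = _
  rw [qbinom_zero_right]; ring

lemma qbinom_geom {R : Type*} [CommRing R] (q : R) (n : ℕ) :
    (q - 1) * qbinom q n 1 = q ^ n - 1 := by
  induction n with
  | zero => show (q-1) * 0 = _ ; simp
  | succ n ih => rw [qbinom_succ_one, pow_succ]; linear_combination q * ih

lemma sum_antidiagonal_pair {M : Type*} [AddCommMonoid M] {k : ℕ} (hk : 0 < k)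
    (f : ℕ × ℕ → M)
    (h : ∀ p ∈ Finset.HasAntidiagonal.antidiagonal k, p ≠ (k, 0) → p ≠ (0, k) → f p = 0) :
    ∑ p ∈ Finset.HasAntidiagonal.antidiagonal k, f p = f (k, 0) + f (0, k) := by
  have hm1 : ((k : ℕ), (0 : ℕ)) ∈ Finset.HasAntidiagonal.antidiagonal k := by simp
  rw [← Finset.add_sum_erase _ f hm1]
  congr 1
  have hm2 : ((0 : ℕ), (k : ℕ)) ∈ (Finset.HasAntidiagonal.antidiagonal k).erase (k, 0) := by
    refine Finset.mem_erase.mpr ⟨?_, by simp⟩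
    simp [Prod.ext_iff]; omega
  rw [Finset.sum_eq_single_of_mem _ hm2]
  intro p hp hne
  have hp' := Finset.mem_erase.mp hp
  exact h p hp'.2 hp'.1 hne

namespace IDqRing

variable {K : Type*} [Field K] {q t : K} (D : IDqRing K q t)

def IsConst (a : K) : Prop := ∀ k, 0 < k → D.δ k a = 0

lemma sigma_of_isConst {a : K} (h : D.IsConst a) : D.σ a = a := by
  have h1 := D.δ_one a
  rw [h 1 one_pos, mul_zero] at h1
  exact (sub_eq_zero.mp h1.symm)

lemma sigma_iter_of_isConst {a : K} (h : D.IsConst a) (n : ℕ) : (⇑D.σ)^[n] a = a :=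
  Function.iterate_fixed (D.sigma_of_isConst h) n

lemma sigma_iter_zero (n : ℕ) : (⇑D.σ)^[n] (0 : K) = 0 :=
  Function.iterate_fixed (map_zero D.σ) n

lemma isConst_one : D.IsConst (1 : K) := by
  intro k hk
  induction k using Nat.strong_induction_on with
  | _ k IH =>
  have h := D.leibniz k 1 1
  rw [one_mul, sum_antidiagonal_pair hk _ ?_] at h
  · have h' : D.δ k 1 = D.δ k 1 + D.δ k 1 := by
      simpa [D.δ_zero, Function.iterate_fixed (map_one D.σ) k] using h
    exact left_eq_add.mp h'
  · intro p hp h1 h2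
    rcases p with ⟨i, l⟩
    rw [Finset.HasAntidiagonal.mem_antidiagonal] at hp
    have h1' : ¬(i = k ∧ l = 0) := fun hh => h1 (by rw [hh.1, hh.2])
    have h2' : ¬(i = 0 ∧ l = k) := fun hh => h2 (by rw [hh.1, hh.2])
    have hl : 0 < l ∧ l < k := by omega
    show (⇑D.σ)^[i] (D.δ l 1) * D.δ i 1 = 0
    rw [IH l hl.2 hl.1, D.sigma_iter_zero, zero_mul]

lemma delta_isConst_mul {a : K} (ha : D.IsConst a) (k : ℕ) (b : K) :
    D.δ k (a * b) = a * D.δ k b := by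
  rw [D.leibniz]
  rw [Finset.sum_eq_single_of_mem (k, 0) (by simp)]
  · show (⇑D.σ)^[k] (D.δ 0 a) * D.δ k b = _
    rw [D.δ_zero, D.sigma_iter_of_isConst ha]
  · intro p hp hne
    rcases p with ⟨i, l⟩
    rw [Finset.HasAntidiagonal.mem_antidiagonal] at hp
    have hl : 0 < l := by
      rcases Nat.eq_zero_or_pos l with h0 | h0
      · subst h0
        simp only [Finset.mem_antidiagonal, add_zero] at hp
        exact absurd (by rw [hp]) hne
      · exact h0
    show (⇑D.σ)^[i] (D.δ l a) * D.δ i b = 0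
    rw [ha l hl, D.sigma_iter_zero, zero_mul]

lemma isConst_zero : D.IsConst (0 : K) := fun k _ => map_zero _

lemma isConst_add {a b : K} (ha : D.IsConst a) (hb : D.IsConst b) : D.IsConst (a + b) :=
  fun k hk => by rw [map_add, ha k hk, hb k hk, add_zero]

lemma isConst_mul {a b : K} (ha : D.IsConst a) (hb : D.IsConst b) : D.IsConst (a * b) :=
  fun k hk => by rw [D.delta_isConst_mul ha, hb k hk, mul_zero]

lemma isConst_q : D.IsConst q := fun k hk => D.δ_q k hk

lemma isConst_q_pow (n : ℕ) : D.IsConst (q ^ n) := by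
  induction n with
  | zero => rw [pow_zero]; exact D.isConst_one
  | succ n ih => rw [pow_succ]; exact D.isConst_mul ih D.isConst_q

lemma isConst_qbinom : ∀ n k : ℕ, D.IsConst (qbinom q n k)
  | _, 0 => by rw [qbinom_zero_right]; exact D.isConst_one
  | 0, k+1 => by rw [qbinom_zero_succ]; exact D.isConst_zero
  | n+1, k+1 => by
    show D.IsConst (qbinom q n k + q ^ (k + 1) * qbinom q n (k + 1))
    exact D.isConst_add (isConst_qbinom n k)
      (D.isConst_mul (D.isConst_q_pow _) (isConst_qbinom n (k+1)))

lemma delta_one_mul (a b : K) :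
    D.δ 1 (a * b) = D.δ 1 a * b + D.σ a * D.δ 1 b := by
  rw [D.leibniz, sum_antidiagonal_pair one_pos _ ?_]
  · show (⇑D.σ)^[1] (D.δ 0 a) * D.δ 1 b + (⇑D.σ)^[0] (D.δ 1 a) * D.δ 0 b = _
    rw [D.δ_zero, D.δ_zero]
    simp only [Function.iterate_one, Function.iterate_zero, id_eq]
    ring
  · intro p hp h1 h2
    rcases p with ⟨i, l⟩
    rw [Finset.HasAntidiagonal.mem_antidiagonal] at hp
    have h1' : ¬(i = 1 ∧ l = 0) := fun hh => h1 (by rw [hh.1, hh.2])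
    have h2' : ¬(i = 0 ∧ l = 1) := fun hh => h2 (by rw [hh.1, hh.2])
    exact absurd rfl (by omega : ¬ (0:ℕ) = 0)

lemma sigma_apply_eq (a : K) : D.σ a = a + (q - 1) * t * D.δ 1 a := by
  linear_combination -(D.δ_one a)

lemma delta_mul_of {m : ℕ} (hm : 0 < m) {a : K} (ha0 : D.σ a = a)
    (hal : ∀ l, 0 < l → l < m → D.δ l a = 0) (b : K) :
    D.δ m (a * b) = D.δ m a * b + a * D.δ m b := by
  rw [D.leibniz, sum_antidiagonal_pair hm _ ?_]
  · show (⇑D.σ)^[m] (D.δ 0 a) * D.δ m b + (⇑D.σ)^[0] (D.δ m a) * D.δ 0 b = _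
    rw [D.δ_zero, D.δ_zero, Function.iterate_fixed ha0 m]
    simp only [Function.iterate_zero, id_eq]
    ring
  · intro p hp h1 h2
    rcases p with ⟨i, l⟩
    rw [Finset.HasAntidiagonal.mem_antidiagonal] at hp
    have h1' : ¬(i = m ∧ l = 0) := fun hh => h1 (by rw [hh.1, hh.2])
    have h2' : ¬(i = 0 ∧ l = m) := fun hh => h2 (by rw [hh.1, hh.2])
    have hl : 0 < l ∧ l < m := by omega
    show (⇑D.σ)^[i] (D.δ l a) * D.δ i b = 0
    rw [hal l hl.1 hl.2, D.sigma_iter_zero, zero_mul]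

lemma sigma_delta (k : ℕ) (a : K) :
    D.σ (D.δ k a) = D.δ k a + ((q - 1) * t * qbinom q (k + 1) 1) * D.δ (k + 1) a := by
  have hi := D.iter 1 k a
  rw [Nat.add_comm 1 k] at hi
  rw [D.sigma_apply_eq (D.δ k a), hi]
  ring

lemma sigma_iter_mem_span {r : ℕ} (x : Fin r → K) (k : ℕ) :
    (fun j => (⇑D.σ)^[k] (x j)) ∈
      Submodule.span K (Set.range fun m => fun j => D.δ m (x j)) := by
  induction k with
  | zero =>
    refine Submodule.subset_span ⟨0, ?_⟩
    funext j; simp [D.δ_zero]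
  | succ k IH =>
    have key : ∀ v, v ∈ Submodule.span K (Set.range fun m => fun j => D.δ m (x j)) →
        (fun j => D.σ (v j)) ∈
          Submodule.span K (Set.range fun m => fun j => D.δ m (x j)) := by
      intro v hv
      induction hv using Submodule.span_induction with
      | mem w hw =>
        obtain ⟨m, rfl⟩ := hw
        have heq : (fun j => D.σ (D.δ m (x j)))
            = (fun j => D.δ m (x j))
              + ((q - 1) * t * qbinom q (m + 1) 1) • (fun j => D.δ (m + 1) (x j)) := by
          funext j
          simp only [Pi.add_apply, Pi.smul_apply, smul_eq_mul]
          exact D.sigma_delta m (x j)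
        show (fun j => D.σ (D.δ m (x j))) ∈ _
        rw [heq]
        exact Submodule.add_mem _ (Submodule.subset_span ⟨m, rfl⟩)
          (Submodule.smul_mem _ _ (Submodule.subset_span ⟨m + 1, rfl⟩))
      | zero =>
        have heq : (fun j : Fin r => D.σ ((0 : Fin r → K) j)) = 0 := by
          funext j; simp
        rw [heq]; exact Submodule.zero_mem _
      | add u v hu hv hu' hv' =>
        have heq : (fun j => D.σ ((u + v) j))
            = (fun j => D.σ (u j)) + (fun j => D.σ (v j)) := by
          funext j; simp
        rw [heq]; exact Submodule.add_mem _ hu' hv'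
      | smul a u hu hu' =>
        have heq : (fun j => D.σ ((a • u) j)) = (D.σ a) • (fun j => D.σ (u j)) := by
          funext j; simp
        rw [heq]; exact Submodule.smul_mem _ _ hu'
    have heq : (fun j => (⇑D.σ)^[k + 1] (x j)) = fun j => D.σ ((⇑D.σ)^[k] (x j)) :=
      funext fun j => Function.iterate_succ_apply' _ _ _
    rw [heq]
    exact key _ IH

lemma delta_mem_span_sigma {r : ℕ} (hu : (q - 1) * t ≠ 0)
    (hq : ∀ n, 0 < n → qbinom q n 1 ≠ 0) (x : Fin r → K) (m : ℕ) :
    (fun j => D.δ m (x j)) ∈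
      Submodule.span K (Set.range fun k => fun j => (⇑D.σ)^[k] (x j)) := by
  induction m with
  | zero =>
    refine Submodule.subset_span ⟨0, ?_⟩
    funext j; simp [D.δ_zero]
  | succ m IH =>
    have key : ∀ v, v ∈ Submodule.span K (Set.range fun k => fun j => (⇑D.σ)^[k] (x j)) →
        (fun j => D.δ 1 (v j)) ∈
          Submodule.span K (Set.range fun k => fun j => (⇑D.σ)^[k] (x j)) := by
      intro v hv
      induction hv using Submodule.span_induction with
      | mem w hw =>
        obtain ⟨k, rfl⟩ := hw
        have heq : (fun j => D.δ 1 ((⇑D.σ)^[k] (x j)))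
            = ((q - 1) * t)⁻¹ •
              ((fun j => (⇑D.σ)^[k + 1] (x j)) - (fun j => (⇑D.σ)^[k] (x j))) := by
          funext j
          simp only [Pi.smul_apply, Pi.sub_apply, smul_eq_mul]
          rw [Function.iterate_succ_apply' _ _ _, ← D.δ_one ((⇑D.σ)^[k] (x j))]
          field_simp
          rw [mul_assoc, mul_div_assoc, div_self hu, mul_one]
        show (fun j => D.δ 1 ((⇑D.σ)^[k] (x j))) ∈ _
        rw [heq]
        exact Submodule.smul_mem _ _ (Submodule.sub_mem _
          (Submodule.subset_span ⟨k + 1, rfl⟩) (Submodule.subset_span ⟨k, rfl⟩))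
      | zero =>
        have heq : (fun j : Fin r => D.δ 1 ((0 : Fin r → K) j)) = 0 := by
          funext j; simp
        rw [heq]; exact Submodule.zero_mem _
      | add u v hu' hv' hu'' hv'' =>
        have heq : (fun j => D.δ 1 ((u + v) j))
            = (fun j => D.δ 1 (u j)) + (fun j => D.δ 1 (v j)) := by
          funext j; simp
        rw [heq]; exact Submodule.add_mem _ hu'' hv''
      | smul a u hmem hu' =>
        have heq : (fun j => D.δ 1 ((a • u) j))
            = (D.δ 1 a) • u + (D.σ a) • (fun j => D.δ 1 (u j)) := by
          funext j
          simp only [Pi.add_apply, Pi.smul_apply, smul_eq_mul]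
          exact D.delta_one_mul a (u j)
        rw [heq]
        exact Submodule.add_mem _ (Submodule.smul_mem _ _ hmem) (Submodule.smul_mem _ _ hu')
    have heq : (fun j => D.δ (m + 1) (x j))
        = (qbinom q (m + 1) 1)⁻¹ • (fun j => D.δ 1 (D.δ m (x j))) := by
      funext j
      have hi := D.iter 1 m (x j)
      rw [Nat.add_comm 1 m] at hi
      simp only [Pi.smul_apply, smul_eq_mul]
      rw [hi, ← mul_assoc, inv_mul_cancel₀ (hq (m + 1) (Nat.succ_pos m)), one_mul]
    rw [heq]
    exact Submodule.smul_mem _ _ (key _ IH)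

end IDqRing

/-- In an iterative `q`-difference field `K` with constants `C`, if `x₁, …, x_r`
are linearly independent over the constants, then there are natural numbers
`d₁, …, d_r` such that the Wronskian-type determinant
`det((δ^{(d_i)}(x_j))_{i,j})` is nonzero. -/
theorem exists_wronskian_ne_zero {K : Type*} [Field K] (q t : K)
    (D : IDqRing K q t) (r : ℕ) (x : Fin r → K)
    (hx : ∀ c : Fin r → K, (∀ i, ∀ k, 0 < k → D.δ k (c i) = 0) →
      ∑ i, c i * x i = 0 → ∀ i, c i = 0) :
    ∃ d : Fin r → ℕ, (Matrix.of fun i j => D.δ (d i) (x j)).det ≠ 0 := by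
  classical
  by_contra hcon
  push_neg at hcon
  -- Step 1 : the span of the rows (δ^m x_j)_j is a proper subspace
  have hVne : Submodule.span K (Set.range fun m => fun j => D.δ m (x j)) ≠ ⊤ := by
    intro htop
    obtain ⟨b, hbsub, hbspan, hbli⟩ :=
      exists_linearIndependent K (Set.range fun m => fun j => D.δ m (x j))
    have hspan_top : Submodule.span K (Set.range ((↑) : b → (Fin r → K))) = ⊤ := by
      rw [Subtype.range_coe, hbspan]; exact htop
    let B : Module.Basis b K (Fin r → K) := Module.Basis.mk hbli hspan_top.ge
    let e : Fin r ≃ b := (Pi.basisFun K (Fin r)).indexEquiv B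
    choose d hd using fun i : Fin r => hbsub (e i).2
    have hli : LinearIndependent K fun i : Fin r => (fun j => D.δ (d i) (x j)) := by
      have heq : (fun i : Fin r => (fun j => D.δ (d i) (x j)))
          = ((↑) : b → (Fin r → K)) ∘ (fun i => e i) := funext fun i => hd i
      rw [heq]
      exact hbli.comp _ e.injective
    have hunit : IsUnit (Matrix.of fun i j => D.δ (d i) (x j)) := by
      rw [← Matrix.linearIndependent_rows_iff_isUnit]
      exact hli
    exact ((Matrix.isUnit_iff_isUnit_det _).mp hunit).ne_zero (hcon d)
  -- Step 2 : a nonzero annihilating covector c0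
  obtain ⟨f, hfne, hfbot⟩ := Submodule.exists_dual_map_eq_bot_of_lt_top
    (lt_top_iff_ne_top.mpr hVne) inferInstance
  have hfv : ∀ v ∈ Submodule.span K (Set.range fun m => fun j => D.δ m (x j)), f v = 0 := by
    intro v hv
    have hmem : f v ∈ (Submodule.span K (Set.range fun m => fun j => D.δ m (x j))).map f :=
      Submodule.mem_map_of_mem hv
    rw [hfbot] at hmem
    exact (Submodule.mem_bot K).mp hmem
  set c0 : Fin r → K := fun i => f (fun j => if i = j then 1 else 0) with hc0
  have hf_eq : ∀ v : Fin r → K, f v = ∑ j, v j * c0 j := by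
    intro v
    rw [LinearMap.pi_apply_eq_sum_univ f v]
    simp only [smul_eq_mul, hc0]
  have hc0ne : c0 ≠ 0 := by
    intro h
    apply hfne
    apply LinearMap.ext
    intro v
    rw [hf_eq v, h]
    simp
  have hAnn0 : ∀ m, ∑ j, c0 j * D.δ m (x j) = 0 := by
    intro m
    have h1 := hfv _ (Submodule.subset_span ⟨m, rfl⟩)
    rw [hf_eq] at h1
    calc ∑ j, c0 j * D.δ m (x j) = ∑ j, D.δ m (x j) * c0 j :=
          Finset.sum_congr rfl fun j _ => mul_comm _ _
      _ = 0 := h1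
  -- Step 3 : minimal support annihilator
  have hex : ∃ n : ℕ, ∃ c : Fin r → K,
      ((∀ m, ∑ j, c j * D.δ m (x j) = 0) ∧ c ≠ 0) ∧
        (Finset.univ.filter fun j => c j ≠ 0).card = n :=
    ⟨_, c0, ⟨hAnn0, hc0ne⟩, rfl⟩
  obtain ⟨c, ⟨hAnnc, hcne⟩, hccard⟩ := Nat.find_spec hex
  have hmin : ∀ c' : Fin r → K, (∀ m, ∑ j, c' j * D.δ m (x j) = 0) → c' ≠ 0 →
      Nat.find hex ≤ (Finset.univ.filter fun j => c' j ≠ 0).card :=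
    fun c' h1 h2 => Nat.find_min' hex ⟨c', ⟨⟨h1, h2⟩, rfl⟩⟩
  obtain ⟨j0, hj0⟩ : ∃ j0, c j0 ≠ 0 := by
    by_contra h
    push_neg at h
    exact hcne (funext fun j => h j)
  set b : Fin r → K := fun j => (c j0)⁻¹ * c j with hbdef
  have hAnnb : ∀ m, ∑ j, b j * D.δ m (x j) = 0 := by
    intro m
    have h1 : ∑ j, b j * D.δ m (x j) = (c j0)⁻¹ * ∑ j, c j * D.δ m (x j) := by
      rw [Finset.mul_sum]
      exact Finset.sum_congr rfl fun j _ => by rw [hbdef]; ring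
    rw [h1, hAnnc m, mul_zero]
  have hbj0 : b j0 = 1 := by rw [hbdef]; exact inv_mul_cancel₀ hj0
  have hsupp : (Finset.univ.filter fun j => b j ≠ 0) = (Finset.univ.filter fun j => c j ≠ 0) := by
    apply Finset.filter_congr
    intro j _
    rw [hbdef]
    simp [mul_eq_zero, inv_eq_zero, hj0]
  have hzero : ∀ e : Fin r → K, (∀ m, ∑ j, e j * D.δ m (x j) = 0) → e j0 = 0 →
      (∀ j, b j = 0 → e j = 0) → e = 0 := by
    intro e hAnn hj0e hsub
    by_contra hne
    have hj0mem : j0 ∈ (Finset.univ.filter fun j => b j ≠ 0) := by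
      rw [Finset.mem_filter]
      exact ⟨Finset.mem_univ j0, by rw [hbj0]; exact one_ne_zero⟩
    have h1 : (Finset.univ.filter fun j => e j ≠ 0) ⊆
        (Finset.univ.filter fun j => b j ≠ 0).erase j0 := by
      intro j hj
      rw [Finset.mem_filter] at hj
      refine Finset.mem_erase.mpr ⟨?_, ?_⟩
      · rintro rfl; exact hj.2 hj0e
      · rw [Finset.mem_filter]
        exact ⟨Finset.mem_univ j, fun hb => hj.2 (hsub j hb)⟩
    have h2 := Finset.card_le_card h1
    rw [Finset.card_erase_of_mem hj0mem, hsupp, hccard] at h2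
    have h3 := hmin e hAnn hne
    have h4 : 0 < Nat.find hex := by
      rw [← hccard, ← hsupp]
      exact Finset.card_pos.mpr ⟨j0, hj0mem⟩
    omega
  -- functional fact : annihilating covectors kill everything in the span
  have hfun : ∀ (c' : Fin r → K) (W : ℕ → Fin r → K), (∀ m, ∑ j, c' j * W m j = 0) →
      ∀ v ∈ Submodule.span K (Set.range W), ∑ j, c' j * v j = 0 := by
    intro c' W hW v hv
    induction hv using Submodule.span_induction with
    | mem w hw => obtain ⟨m, rfl⟩ := hw; exact hW m
    | zero => simp
    | add u v hu hv hu' hv' =>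
      have h1 : ∑ j, c' j * (u + v) j = (∑ j, c' j * u j) + ∑ j, c' j * v j := by
        rw [← Finset.sum_add_distrib]
        exact Finset.sum_congr rfl fun j _ => by simp [mul_add]
      rw [h1, hu', hv', add_zero]
    | smul a u hu hu' =>
      have h1 : ∑ j, c' j * (a • u) j = a * ∑ j, c' j * u j := by
        rw [Finset.mul_sum]
        refine Finset.sum_congr rfl fun j _ => ?_
        simp only [Pi.smul_apply, smul_eq_mul]
        ring
      rw [h1, hu', mul_zero]
  -- Step 4 : first-order constancy of b
  have hG1 : ∀ j, D.δ 1 (b j) = 0 := by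
    by_cases hcase : ∀ n, 0 < n → (q - 1) * t * qbinom q n 1 ≠ 0
    · -- Case B : no vanishing q-integers; use the Casoratian (σ) argument
      have hu : (q - 1) * t ≠ 0 := fun h => hcase 1 one_pos (by rw [h, zero_mul])
      have hqn : ∀ n, 0 < n → qbinom q n 1 ≠ 0 :=
        fun n hn h => hcase n hn (by rw [h, mul_zero])
      have hSAnn : ∀ c' : Fin r → K, (∀ m, ∑ j, c' j * D.δ m (x j) = 0) →
          ∀ k, ∑ j, c' j * (⇑D.σ)^[k] (x j) = 0 := by
        intro c' hc' k
        exact hfun c' (fun m j => D.δ m (x j)) hc' _ (D.sigma_iter_mem_span x k)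
      have hAnnS : ∀ c' : Fin r → K, (∀ k, ∑ j, c' j * (⇑D.σ)^[k] (x j) = 0) →
          ∀ m, ∑ j, c' j * D.δ m (x j) = 0 := by
        intro c' hc' m
        exact hfun c' (fun k j => (⇑D.σ)^[k] (x j)) hc' _ (D.delta_mem_span_sigma hu hqn x m)
      set d' : Fin r → K := fun j => D.σ.symm (D.σ (b j) - b j) with hd'def
      have hSb := hSAnn b hAnnb
      have hSd' : ∀ k, ∑ j, d' j * (⇑D.σ)^[k] (x j) = 0 := by
        intro k
        have happ : D.σ (∑ j, d' j * (⇑D.σ)^[k] (x j))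
            = ∑ j, (D.σ (b j) - b j) * (⇑D.σ)^[k + 1] (x j) := by
          rw [map_sum]
          refine Finset.sum_congr rfl fun j _ => ?_
          rw [map_mul, hd'def]
          rw [D.σ.apply_symm_apply, Function.iterate_succ_apply']
        have h2 : ∑ j, (D.σ (b j) - b j) * (⇑D.σ)^[k + 1] (x j)
            = D.σ (∑ j, b j * (⇑D.σ)^[k] (x j)) - ∑ j, b j * (⇑D.σ)^[k + 1] (x j) := by
          rw [map_sum, ← Finset.sum_sub_distrib]
          refine Finset.sum_congr rfl fun j _ => ?_
          rw [map_mul D.σ (b j) ((⇑D.σ)^[k] (x j)), Function.iterate_succ_apply']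
          ring
        rw [h2, hSb k, hSb (k + 1), map_zero, sub_zero] at happ
        exact D.σ.injective (by rw [happ, map_zero])
      have hAd' := hAnnS d' hSd'
      have hd'0 : d' = 0 := by
        apply hzero d' hAd'
        · show D.σ.symm (D.σ (b j0) - b j0) = 0
          rw [hbj0]
          simp
        · intro j hbj
          show D.σ.symm (D.σ (b j) - b j) = 0
          rw [hbj]
          simp
      intro j
      have h6 : D.σ (b j) - b j = 0 := by
        have h7 : D.σ.symm (D.σ (b j) - b j) = 0 := by
          have h9 := congrFun hd'0 j
          simpa [hd'def] using h9
        have h8 := congrArg D.σ h7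
        rwa [D.σ.apply_symm_apply, map_zero] at h8
      have h5 := D.δ_one (b j)
      rw [h6] at h5
      rcases mul_eq_zero.mp h5 with h | h
      · exact absurd h hu
      · exact h
    · -- Case A : some (q-1)t[n]_q vanishes; propagate the recursion downwards
      push_neg at hcase
      obtain ⟨n, hn, hαn⟩ := hcase
      have hrec : ∀ m, (∑ j, D.δ 1 (b j) * D.δ m (x j))
          = -((q - 1) * t * qbinom q (m + 1) 1 * ∑ j, D.δ 1 (b j) * D.δ (m + 1) (x j)) := by
        intro m
        have h0 : D.δ 1 (∑ j, b j * D.δ m (x j)) = 0 := by rw [hAnnb m, map_zero]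
        rw [map_sum] at h0
        have hterm : ∀ j, D.δ 1 (b j * D.δ m (x j))
            = D.δ 1 (b j) * D.δ m (x j)
              + (qbinom q (m + 1) 1 * (b j * D.δ (m + 1) (x j))
                + (q - 1) * t * qbinom q (m + 1) 1 * (D.δ 1 (b j) * D.δ (m + 1) (x j))) := by
          intro j
          have hi := D.iter 1 m (x j)
          rw [Nat.add_comm 1 m] at hi
          rw [D.delta_one_mul, D.sigma_apply_eq (b j), hi]
          ring
        rw [Finset.sum_congr rfl fun j _ => hterm j, Finset.sum_add_distrib,
          Finset.sum_add_distrib, ← Finset.mul_sum, ← Finset.mul_sum, hAnnb (m + 1),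
          mul_zero, zero_add] at h0
        linear_combination h0
      have hα0 : ∀ m : ℕ, ∃ m', m ≤ m' ∧ (q - 1) * t * qbinom q (m' + 1) 1 = 0 := by
        intro m
        by_cases hu : (q - 1) * t = 0
        · exact ⟨m, le_refl m, by rw [hu, zero_mul]⟩
        · have hq1 : q - 1 ≠ 0 := fun h => hu (by rw [h, zero_mul])
          have hbn : qbinom q n 1 = 0 := by
            rcases mul_eq_zero.mp hαn with h | h
            · exact absurd h hu
            · exact h
          have hqn : q ^ n = 1 := by
            have hg := qbinom_geom q n
            rw [hbn, mul_zero] at hg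
            exact sub_eq_zero.mp hg.symm
          refine ⟨n * (m + 1) - 1, ?_, ?_⟩
          · have h1 : 1 * (m + 1) ≤ n * (m + 1) := Nat.mul_le_mul_right _ hn
            omega
          · have hpos : 1 ≤ n * (m + 1) := Nat.mul_pos hn (Nat.succ_pos m)
            rw [Nat.sub_add_cancel hpos]
            have hq' : q ^ (n * (m + 1)) = 1 := by rw [pow_mul, hqn, one_pow]
            have hg := qbinom_geom q (n * (m + 1))
            rw [hq', sub_self] at hg
            rcases mul_eq_zero.mp hg with h | h
            · exact absurd h hq1
            · rw [h, mul_zero]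
      have hy : ∀ m, (∑ j, D.δ 1 (b j) * D.δ m (x j)) = 0 := by
        intro m
        obtain ⟨m', hm'ge, hm'0⟩ := hα0 m
        have hdown : ∀ i, (∑ j, D.δ 1 (b j) * D.δ (m' - i) (x j)) = 0 := by
          intro i
          induction i with
          | zero => rw [Nat.sub_zero, hrec m', hm'0, zero_mul, neg_zero]
          | succ i IH =>
            by_cases hi : i < m'
            · have heq : m' - (i + 1) + 1 = m' - i := by omega
              rw [hrec (m' - (i + 1)), heq, IH, mul_zero, neg_zero]
            · have heq : m' - (i + 1) = m' - i := by omega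
              rw [heq]; exact IH
        have h9 := hdown (m' - m)
        rw [show m' - (m' - m) = m by omega] at h9
        exact h9
      have he0 : (fun j => D.δ 1 (b j)) = 0 := by
        apply hzero _ hy
        · show D.δ 1 (b j0) = 0
          rw [hbj0]
          exact D.isConst_one 1 one_pos
        · intro j hbj
          show D.δ 1 (b j) = 0
          rw [hbj]
          exact map_zero _
      intro j
      exact congrFun he0 j
  -- Step 5 : full constancy by strong induction
  have hsb : ∀ j, D.σ (b j) = b j := by
    intro j
    have h5 := D.δ_one (b j)
    rw [hG1 j, mul_zero] at h5
    exact sub_eq_zero.mp h5.symm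
  have hconst : ∀ m, 0 < m → ∀ j, D.δ m (b j) = 0 := by
    intro m
    induction m using Nat.strong_induction_on with
    | _ m IH =>
    intro hm j
    rcases Nat.lt_or_ge m 2 with h2 | h2
    · have hm1 : m = 1 := by omega
      subst hm1
      exact hG1 j
    · have hAg : ∀ k, ∑ j, D.δ m (b j) * D.δ k (x j) = 0 := by
        intro k
        have h0 : D.δ m (∑ j, b j * D.δ k (x j)) = 0 := by rw [hAnnb k, map_zero]
        rw [map_sum] at h0
        have hterm : ∀ j', D.δ m (b j' * D.δ k (x j'))
            = D.δ m (b j') * D.δ k (x j')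
              + qbinom q (m + k) m * (b j' * D.δ (m + k) (x j')) := by
          intro j'
          rw [D.delta_mul_of hm (hsb j') (fun l hl hlm => IH l hlm hl j'), D.iter m k]
          ring
        rw [Finset.sum_congr rfl fun j' _ => hterm j', Finset.sum_add_distrib,
          ← Finset.mul_sum, hAnnb (m + k), mul_zero, add_zero] at h0
        exact h0
      have hg0 : (fun j' => D.δ m (b j')) = 0 := by
        apply hzero _ hAg
        · show D.δ m (b j0) = 0
          rw [hbj0]
          exact D.isConst_one m hm
        · intro j' hbj'
          show D.δ m (b j') = 0
          rw [hbj']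
          exact map_zero _
      exact congrFun hg0 j
  -- Conclusion
  have hsum : ∑ i, b i * x i = 0 := by
    have h0 := hAnnb 0
    calc ∑ i, b i * x i = ∑ j, b j * D.δ 0 (x j) :=
          Finset.sum_congr rfl fun j _ => by rw [D.δ_zero]
      _ = 0 := h0
  have hfinal := hx b (fun i k hk => hconst k hk i) hsum j0
  rw [hbj0] at hfinal
  exact one_ne_zero hfinal
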